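/- Let d ≥ 2, ω = exp(2πi/d), Z the generalized Pauli-Z on ℂ^d, |J⟩ the uniform superposition, and B₁ = ω^{1/2}(I − 2|J⟩⟨J|)Z (where ω^{1/2} = exp(πi/d)). Then B₁ is unitary and for every 1 ≤ k ≤ d one has B₁^k = ω^{k/2}(I − 2∑_{ℓ=0}^{k−1} Z^ℓ|J⟩⟨J|Z^{−ℓ}) Z^k; in particular B₁^d = I. -/

import Mathlib

open Complex Matrix

lemma aux_sum_pow {d : ℕ} (x : ℂ) (hx : x ^ d = 1) (hx1 : x ≠ 1) :
    ∑ i : Fin d, x ^ (i:ℕ) = 0 := by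
  rw [Fin.sum_univ_eq_sum_range, geom_sum_eq hx1, hx, sub_self, zero_div]

lemma aux_vmv_mul_vmv {n : Type*} [Fintype n] (u v x y : n → ℂ) :
    Matrix.vecMulVec u v * Matrix.vecMulVec x y = (∑ k, v k * x k) • Matrix.vecMulVec u y := by
  ext i j
  simp only [Matrix.mul_apply, Matrix.vecMulVec_apply, Matrix.smul_apply, smul_eq_mul]
  rw [Finset.sum_mul]
  exact Finset.sum_congr rfl fun k _ => by ring

lemma aux_diag_mul_vmv {n : Type*} [Fintype n] [DecidableEq n] (w u v : n → ℂ) :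
    Matrix.diagonal w * Matrix.vecMulVec u v = Matrix.vecMulVec (fun i => w i * u i) v := by
  ext i j
  rw [Matrix.diagonal_mul]
  simp [Matrix.vecMulVec_apply, mul_assoc]

lemma aux_vmv_mul_diag {n : Type*} [Fintype n] [DecidableEq n] (w u v : n → ℂ) :
    Matrix.vecMulVec u v * Matrix.diagonal w = Matrix.vecMulVec u (fun j => v j * w j) := by
  ext i j
  rw [Matrix.mul_diagonal]
  simp [Matrix.vecMulVec_apply, mul_assoc]

lemma aux_expand (d : ℕ) (S Q : Matrix (Fin d) (Fin d) ℂ) (h : S * Q = 0) :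
    (1 - (2:ℂ)•S) * (1 - (2:ℂ)•Q) = 1 - (2:ℂ)•(S + Q) := by
  rw [sub_mul, one_mul, mul_sub, mul_one, smul_mul_assoc, mul_smul_comm, h, smul_zero,
    smul_zero, sub_zero, smul_add]
  abel

/-- `B₁ = ω^{1/2}(I − 2|J⟩⟨J|)Z` is unitary, satisfies
`B₁^k = ω^{k/2}(I − 2∑_{ℓ<k} Z^ℓ|J⟩⟨J|Z^{−ℓ})Z^k` for `1 ≤ k ≤ d`
(where `Z^{-ℓ}` is written as `(star Z)^ℓ` since `Z` is unitary), and `B₁^d = I`. -/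
theorem B1_powers (d : ℕ) (hd : 2 ≤ d)
    (ω : ℂ) (hω : ω = Complex.exp (2 * Real.pi * I / d))
    (ωhalf : ℂ) (hωhalf : ωhalf = Complex.exp (Real.pi * I / d))
    (Z : Matrix (Fin d) (Fin d) ℂ)
    (hZ : Z = Matrix.diagonal fun i : Fin d => ω ^ (i : ℕ))
    (J : Fin d → ℂ) (hJ : J = fun _ => (1 : ℂ) / Real.sqrt d)
    (Jproj : Matrix (Fin d) (Fin d) ℂ)
    (hJproj : Jproj = Matrix.vecMulVec J fun i => (starRingEnd ℂ) (J i))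
    (B₁ : Matrix (Fin d) (Fin d) ℂ)
    (hB₁ : B₁ = ωhalf • ((1 - (2 : ℂ) • Jproj) * Z)) :
    (B₁ * star B₁ = 1 ∧ star B₁ * B₁ = 1) ∧
    (∀ k : ℕ, 1 ≤ k → k ≤ d →
      B₁ ^ k = ωhalf ^ k •
        ((1 - (2 : ℂ) • ∑ ℓ ∈ Finset.range k, Z ^ ℓ * Jproj * (star Z) ^ ℓ) * Z ^ k)) ∧
    B₁ ^ d = 1 := by
  have hd0 : (d:ℂ) ≠ 0 := Nat.cast_ne_zero.mpr (by omega)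
  have hprim : IsPrimitiveRoot ω d := hω ▸ Complex.isPrimitiveRoot_exp d (by omega)
  have hωd : ω ^ d = 1 := hprim.pow_eq_one
  have hω0 : ω ≠ 0 := by rw [hω]; exact Complex.exp_ne_zero _
  have hhalf0 : ωhalf ≠ 0 := by rw [hωhalf]; exact Complex.exp_ne_zero _
  have hωconj : (starRingEnd ℂ) ω = ω⁻¹ := by
    rw [hω, ← Complex.exp_conj, ← Complex.exp_neg]
    congr 1
    simp [map_div₀, Complex.conj_I, map_ofNat]
    ring
  have hhalfconj : (starRingEnd ℂ) ωhalf = ωhalf⁻¹ := by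
    rw [hωhalf, ← Complex.exp_conj, ← Complex.exp_neg]
    congr 1
    simp [map_div₀, Complex.conj_I]
    ring
  have hhalfd : ωhalf ^ d = -1 := by
    rw [hωhalf, ← Complex.exp_nat_mul]
    rw [show (d:ℂ) * (↑Real.pi * I / ↑d) = ↑Real.pi * I by field_simp]
    exact Complex.exp_pi_mul_I
  have hωmd : ∀ m : ℕ, ω ^ (m * d) = 1 := fun m => by
    rw [mul_comm, pow_mul, hωd, one_pow]
  -- J facts
  have hJsq : ∀ i, (starRingEnd ℂ) (J i) * J i = 1 / (d:ℂ) := by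
    intro i
    rw [hJ]
    simp only [map_div₀, Complex.conj_ofReal]
    rw [div_mul_div_comm, ← Complex.ofReal_mul, Real.mul_self_sqrt (by positivity)]
    norm_num
  -- Z facts
  have hZpow : ∀ m : ℕ, Z ^ m = Matrix.diagonal (fun i : Fin d => ω ^ ((i:ℕ) * m)) := by
    intro m
    rw [hZ, Matrix.diagonal_pow, Matrix.diagonal_eq_diagonal_iff]
    intro i
    simp [Pi.pow_apply, pow_mul]
  have hZstar : star Z = Matrix.diagonal (fun i : Fin d => (ω⁻¹) ^ (i:ℕ)) := by
    rw [hZ, Matrix.star_eq_conjTranspose, Matrix.diagonal_conjTranspose,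
      Matrix.diagonal_eq_diagonal_iff]
    intro i
    simp [Pi.star_apply, star_pow, Complex.star_def, hωconj]
  have hZstarpow : ∀ m : ℕ, (star Z) ^ m = Matrix.diagonal (fun i : Fin d => (ω⁻¹) ^ ((i:ℕ) * m)) := by
    intro m
    rw [hZstar, Matrix.diagonal_pow, Matrix.diagonal_eq_diagonal_iff]
    intro i
    simp [Pi.pow_apply, pow_mul]
  have hZZstar : Z * star Z = 1 := by
    rw [hZstar, hZ, Matrix.diagonal_mul_diagonal, ← Matrix.diagonal_one,
      Matrix.diagonal_eq_diagonal_iff]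
    intro i
    rw [← mul_pow, mul_inv_cancel₀ hω0, one_pow]
  have hZstarZ : star Z * Z = 1 := by
    rw [hZstar, hZ, Matrix.diagonal_mul_diagonal, ← Matrix.diagonal_one,
      Matrix.diagonal_eq_diagonal_iff]
    intro i
    rw [← mul_pow, inv_mul_cancel₀ hω0, one_pow]
  have hZsZ : ∀ k : ℕ, (star Z) ^ k * Z ^ k = 1 := by
    intro k
    rw [hZstarpow, hZpow, Matrix.diagonal_mul_diagonal, ← Matrix.diagonal_one,
      Matrix.diagonal_eq_diagonal_iff]
    intro i
    rw [← mul_pow, inv_mul_cancel₀ hω0, one_pow]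
  have hZd : Z ^ d = 1 := by
    rw [hZpow, ← Matrix.diagonal_one, Matrix.diagonal_eq_diagonal_iff]
    intro i
    exact hωmd i
  -- projector facts
  have hJJ : ∑ k : Fin d, (starRingEnd ℂ) (J k) * J k = 1 := by
    rw [Finset.sum_congr rfl fun k _ => hJsq k, Finset.sum_const, Finset.card_univ,
      Fintype.card_fin, nsmul_eq_mul]
    field_simp
  have hPP : Jproj * Jproj = Jproj := by
    rw [hJproj, aux_vmv_mul_vmv, hJJ, one_smul]
  have hPstar : star Jproj = Jproj := by
    rw [hJproj]
    ext i j
    simp [Matrix.star_apply, Matrix.vecMulVec_apply, mul_comm]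
  have hR2 : (1 - (2:ℂ) • Jproj) * (1 - (2:ℂ) • Jproj) = 1 := by
    rw [sub_mul, one_mul, mul_sub, mul_one, smul_mul_assoc, mul_smul_comm, hPP, smul_smul]
    module
  have hPZP : ∀ m : ℕ, 1 ≤ m → m < d → Jproj * Z ^ m * Jproj = 0 := by
    intro m h1 h2
    rw [hJproj, hZpow m, aux_vmv_mul_diag, aux_vmv_mul_vmv]
    have hdot : ∑ k : Fin d, ((starRingEnd ℂ) (J k) * ω ^ ((k:ℕ) * m)) * J k = 0 := by
      have : ∀ k : Fin d, ((starRingEnd ℂ) (J k) * ω ^ ((k:ℕ) * m)) * J k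
          = (1/(d:ℂ)) * (ω ^ m) ^ (k:ℕ) := by
        intro k
        rw [mul_right_comm, hJsq k, mul_comm (k:ℕ) m, pow_mul]
      rw [Finset.sum_congr rfl fun k _ => this k, ← Finset.mul_sum,
        aux_sum_pow (ω ^ m) (by rw [← pow_mul, hωmd]) (hprim.pow_ne_one_of_pos_of_lt (by omega) h2),
        mul_zero]
    rw [hdot, zero_smul]
  -- the term in the sum, as a rank-one matrix
  have hterm : ∀ ℓ : ℕ, Z ^ ℓ * Jproj * (star Z) ^ ℓ
      = Matrix.vecMulVec (fun i : Fin d => ω ^ ((i:ℕ) * ℓ) * J i)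
          (fun j : Fin d => (starRingEnd ℂ) (J j) * (ω⁻¹) ^ ((j:ℕ) * ℓ)) := by
    intro ℓ
    rw [hZpow, hZstarpow, hJproj, aux_diag_mul_vmv, aux_vmv_mul_diag]
  have hSd : ∑ ℓ ∈ Finset.range d, Z ^ ℓ * Jproj * (star Z) ^ ℓ = 1 := by
    ext i j
    rw [Matrix.sum_apply]
    simp only [hterm, Matrix.vecMulVec_apply]
    by_cases hij : i = j
    · subst hij
      have h1 : ∀ ℓ ∈ Finset.range d,
          (ω ^ ((i:ℕ) * ℓ) * J i) * ((starRingEnd ℂ) (J i) * (ω⁻¹) ^ ((i:ℕ) * ℓ)) = 1/(d:ℂ) := by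
        intro ℓ _
        have : ω ^ ((i:ℕ) * ℓ) * (ω⁻¹) ^ ((i:ℕ) * ℓ) = 1 := by
          rw [← mul_pow, mul_inv_cancel₀ hω0, one_pow]
        calc (ω ^ ((i:ℕ) * ℓ) * J i) * ((starRingEnd ℂ) (J i) * (ω⁻¹) ^ ((i:ℕ) * ℓ))
            = (ω ^ ((i:ℕ) * ℓ) * (ω⁻¹) ^ ((i:ℕ) * ℓ)) * ((starRingEnd ℂ) (J i) * J i) := by ring
          _ = 1/(d:ℂ) := by rw [this, hJsq i, one_mul]
      rw [Finset.sum_congr rfl h1, Finset.sum_const, Finset.card_range, nsmul_eq_mul,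
        Matrix.one_apply_eq]
      field_simp
    · have h1 : ∀ ℓ ∈ Finset.range d,
          (ω ^ ((i:ℕ) * ℓ) * J i) * ((starRingEnd ℂ) (J j) * (ω⁻¹) ^ ((j:ℕ) * ℓ))
          = (J i * (starRingEnd ℂ) (J j)) * (ω ^ (i:ℕ) * (ω⁻¹) ^ (j:ℕ)) ^ ℓ := by
        intro ℓ _
        rw [mul_pow, ← pow_mul, ← pow_mul]
        ring
      have hx1 : ω ^ (i:ℕ) * (ω⁻¹) ^ (j:ℕ) ≠ 1 := by
        intro h
        apply hij
        have : ω ^ (i:ℕ) = ω ^ (j:ℕ) := by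
          have hj0 : (ω:ℂ) ^ (j:ℕ) ≠ 0 := pow_ne_zero _ hω0
          field_simp [inv_pow] at h
          rw [one_div, inv_pow, mul_inv_eq_one₀ hj0] at h
          exact h
        exact Fin.ext (hprim.pow_inj i.isLt j.isLt this)
      have hxd : (ω ^ (i:ℕ) * (ω⁻¹) ^ (j:ℕ)) ^ d = 1 := by
        simp only [mul_pow, ← pow_mul, inv_pow]
        rw [hωmd, hωmd, inv_one, mul_one]
      rw [Finset.sum_congr rfl h1, ← Finset.mul_sum, geom_sum_eq hx1, hxd, sub_self, zero_div,
        mul_zero, Matrix.one_apply_ne hij]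
  -- power formula
  have key : ∀ k : ℕ, 1 ≤ k → k ≤ d →
      B₁ ^ k = ωhalf ^ k •
        ((1 - (2 : ℂ) • ∑ ℓ ∈ Finset.range k, Z ^ ℓ * Jproj * (star Z) ^ ℓ) * Z ^ k) := by
    intro k
    induction k with
    | zero => omega
    | succ n ih =>
      intro _ hle
      by_cases hn : n = 0
      · subst hn
        simp [Finset.sum_range_one, pow_zero, pow_one, one_mul, mul_one, hB₁]
      · have h1n : 1 ≤ n := by omega
        have hnd : n < d := by omega
        have e1 : Z ^ n * (1 - (2:ℂ) • Jproj)
            = (1 - (2:ℂ) • (Z ^ n * Jproj * (star Z) ^ n)) * Z ^ n := by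
          rw [mul_sub, sub_mul, mul_one, one_mul, mul_smul_comm, smul_mul_assoc]
          congr 2
          rw [mul_assoc, mul_assoc, hZsZ n, mul_one]
        have hcross : (∑ ℓ ∈ Finset.range n, Z ^ ℓ * Jproj * (star Z) ^ ℓ)
            * (Z ^ n * Jproj * (star Z) ^ n) = 0 := by
          rw [Finset.sum_mul]
          apply Finset.sum_eq_zero
          intro ℓ hℓ
          rw [Finset.mem_range] at hℓ
          have h1 : (star Z) ^ ℓ * Z ^ n = Z ^ (n - ℓ) := by
            rw [show n = ℓ + (n - ℓ) by omega, pow_add, ← mul_assoc, hZsZ ℓ, one_mul,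
              show ℓ + (n - ℓ) - ℓ = n - ℓ by omega]
          have h2 : Z ^ ℓ * Jproj * (star Z) ^ ℓ * (Z ^ n * Jproj * (star Z) ^ n)
              = Z ^ ℓ * (Jproj * Z ^ (n - ℓ) * Jproj) * (star Z) ^ n := by
            rw [← h1]
            simp only [mul_assoc]
          rw [h2, hPZP (n - ℓ) (by omega) (by omega), mul_zero, zero_mul]
        rw [pow_succ, ih h1n (by omega), hB₁, smul_mul_smul_comm]
        congr 1
        calc ((1 - (2:ℂ) • ∑ ℓ ∈ Finset.range n, Z ^ ℓ * Jproj * (star Z) ^ ℓ) * Z ^ n)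
              * ((1 - (2:ℂ) • Jproj) * Z)
            = (1 - (2:ℂ) • ∑ ℓ ∈ Finset.range n, Z ^ ℓ * Jproj * (star Z) ^ ℓ)
              * (Z ^ n * (1 - (2:ℂ) • Jproj)) * Z := by simp only [mul_assoc]
          _ = (1 - (2:ℂ) • ∑ ℓ ∈ Finset.range n, Z ^ ℓ * Jproj * (star Z) ^ ℓ)
              * ((1 - (2:ℂ) • (Z ^ n * Jproj * (star Z) ^ n)) * Z ^ n) * Z := by rw [e1]
          _ = ((1 - (2:ℂ) • ∑ ℓ ∈ Finset.range n, Z ^ ℓ * Jproj * (star Z) ^ ℓ)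
              * (1 - (2:ℂ) • (Z ^ n * Jproj * (star Z) ^ n))) * (Z ^ n * Z) := by
                simp only [mul_assoc]
          _ = (1 - (2:ℂ) • ((∑ ℓ ∈ Finset.range n, Z ^ ℓ * Jproj * (star Z) ^ ℓ)
              + Z ^ n * Jproj * (star Z) ^ n)) * (Z ^ n * Z) := by
                rw [aux_expand d _ _ hcross]
          _ = (1 - (2:ℂ) • ∑ ℓ ∈ Finset.range (n+1), Z ^ ℓ * Jproj * (star Z) ^ ℓ) * (Z ^ n * Z) := by
                rw [Finset.sum_range_succ]
  -- unitarity
  have hstarB : star B₁ = (starRingEnd ℂ) ωhalf • (star Z * (1 - (2:ℂ) • Jproj)) := by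
    rw [hB₁, star_smul, Matrix.star_mul, star_sub, star_one, star_smul, hPstar]
    norm_num [Complex.star_def]
  have hhalfmul : ωhalf * (starRingEnd ℂ) ωhalf = 1 := by
    rw [hhalfconj, mul_inv_cancel₀ hhalf0]
  have hhalfmul' : (starRingEnd ℂ) ωhalf * ωhalf = 1 := by
    rw [hhalfconj, inv_mul_cancel₀ hhalf0]
  refine ⟨⟨?_, ?_⟩, key, ?_⟩
  · rw [hstarB, hB₁, smul_mul_smul_comm, hhalfmul, one_smul, mul_assoc,
      ← mul_assoc Z (star Z), hZZstar, one_mul]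
    exact hR2
  · rw [hstarB, hB₁, smul_mul_smul_comm, hhalfmul', one_smul, mul_assoc,
      ← mul_assoc (1 - (2:ℂ) • Jproj) (1 - (2:ℂ) • Jproj), hR2, one_mul]
    exact hZstarZ
  · rw [key d (by omega) le_rfl, hSd, hZd, hhalfd, mul_one]
    have : (1 : Matrix (Fin d) (Fin d) ℂ) - (2:ℂ) • (1 : Matrix (Fin d) (Fin d) ℂ) = -1 := by
      module
    rw [this]
    simp
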